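/- Let D₀, D₁ be division rings and M a D₀–D₁-bimodule that is finite-dimensional on both the left and the right. Then the right A_M-module (M* D₁), with underlying groups (M* D₁)e₀ = M* = Hom_{D₁}(M_{D₁}, D₁) and (M* D₁)e₁ = D₁, and with right action (δ, b)·(α, m; 0, β) = (δα, δ(m) + bβ), is an injective right A_M-module. -/

import Mathlib

section Bimod

/-- The right dual `Hom_S(N_S, S)` of a right `S`-module `N`
(right modules are treated as modules over the opposite ring). -/
abbrev RightDual (S : Type) [Ring S] (N : Type) [AddCommGroup N] [Module Sᵐᵒᵖ N] :
    Type := N →ₗ[Sᵐᵒᵖ] S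

/-- The left dual `Hom_R(_R N, R)` of a left `R`-module `N`. -/
abbrev LeftDual (R : Type) [Ring R] (N : Type) [AddCommGroup N] [Module R N] :
    Type := N →ₗ[R] R

variable (R S : Type) [Ring R] [Ring S]
variable (N : Type) [AddCommGroup N] [Module R N] [Module Sᵐᵒᵖ N]
  [SMulCommClass R Sᵐᵒᵖ N]

namespace RightDual

/-- If `N` is an `R`–`S`-bimodule, the right dual carries a right `R`-action by
precomposition with the left `R`-action: `(ψ • a) x = ψ (a • x)`. -/
instance : Module Rᵐᵒᵖ (RightDual S N) where
  smul a ψ := ψ.comp (DistribMulAction.toLinearMap Sᵐᵒᵖ N a.unop)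
  one_smul ψ := by
    apply LinearMap.ext; intro x
    show ψ ((1 : R) • x) = ψ x
    rw [one_smul]
  mul_smul a b ψ := by
    apply LinearMap.ext; intro x
    show ψ ((a * b).unop • x) = ψ (b.unop • a.unop • x)
    rw [MulOpposite.unop_mul, mul_smul]
  smul_zero a := by apply LinearMap.ext; intro x; rfl
  smul_add a ψ φ := by apply LinearMap.ext; intro x; rfl
  add_smul a b ψ := by
    apply LinearMap.ext; intro x
    show ψ ((a + b).unop • x) = ψ (a.unop • x) + ψ (b.unop • x)
    rw [MulOpposite.unop_add, add_smul, map_add]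
  zero_smul ψ := by
    apply LinearMap.ext; intro x
    show ψ ((0 : R) • x) = 0
    rw [zero_smul, map_zero]

@[simp] lemma opSMul_apply (a : Rᵐᵒᵖ) (ψ : RightDual S N) (x : N) :
    (a • ψ) x = ψ (a.unop • x) := rfl

@[simp] lemma smul_apply' (s : S) (ψ : RightDual S N) (x : N) :
    (s • ψ) x = s * ψ x := rfl

instance : SMulCommClass S Rᵐᵒᵖ (RightDual S N) where
  smul_comm s a ψ := by apply LinearMap.ext; intro x; rfl

end RightDual

namespace LeftDual

/-- If `N` is an `R`–`S`-bimodule, the left dual carries a left `S`-action by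
precomposition with the right `S`-action: `(b • ψ) x = ψ (x b)`. -/
noncomputable instance : Module S (LeftDual R N) where
  smul b ψ :=
    haveI : SMulCommClass Sᵐᵒᵖ R N := SMulCommClass.symm R Sᵐᵒᵖ N
    ψ.comp (DistribMulAction.toLinearMap R N (MulOpposite.op b))
  one_smul ψ := by
    apply LinearMap.ext; intro x
    show ψ ((MulOpposite.op (1:S)) • x) = ψ x
    rw [MulOpposite.op_one, one_smul]
  mul_smul a b ψ := by
    apply LinearMap.ext; intro x
    show ψ ((MulOpposite.op (a*b)) • x) = ψ (MulOpposite.op b • MulOpposite.op a • x)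
    rw [MulOpposite.op_mul, mul_smul]
  smul_zero a := by apply LinearMap.ext; intro x; rfl
  smul_add a ψ φ := by apply LinearMap.ext; intro x; rfl
  add_smul a b ψ := by
    apply LinearMap.ext; intro x
    show ψ ((MulOpposite.op (a+b)) • x) = ψ (MulOpposite.op a • x) + ψ (MulOpposite.op b • x)
    rw [MulOpposite.op_add, add_smul, map_add]
  zero_smul ψ := by
    apply LinearMap.ext; intro x
    show ψ ((MulOpposite.op (0:S)) • x) = 0
    rw [MulOpposite.op_zero, zero_smul, map_zero]

@[simp] lemma sSMul_apply (b : S) (ψ : LeftDual R N) (x : N) :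
    (b • ψ) x = ψ (MulOpposite.op b • x) := rfl

instance : SMulCommClass S Rᵐᵒᵖ (LeftDual R N) where
  smul_comm s a ψ := by apply LinearMap.ext; intro x; rfl

end LeftDual

end Bimod
set_option linter.unusedSectionVars false

section Species

variable (D₀ D₁ : Type) [DivisionRing D₀] [DivisionRing D₁]
variable (M : Type) [AddCommGroup M] [Module D₀ M] [Module D₁ᵐᵒᵖ M]
  [SMulCommClass D₀ D₁ᵐᵒᵖ M]

/-- Ringel's bimodule species: the triangular matrix ring
`A_M = (D₀, M; 0, D₁)`, realized on the carrier `D₀ × M × D₁`. -/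
abbrev Species : Type := D₀ × M × D₁

namespace Species

/-- Matrix-style multiplication on the triangular matrix ring. -/
instance : Ring (Species D₀ D₁ M) where
  __ := (inferInstance : AddCommGroup (D₀ × M × D₁))
  mul x y := (x.1 * y.1, x.1 • y.2.1 + MulOpposite.op y.2.2 • x.2.1, x.2.2 * y.2.2)
  one := (1, 0, 1)
  mul_assoc x y z := by
    refine Prod.ext (mul_assoc _ _ _) (Prod.ext ?_ (mul_assoc _ _ _))
    show (x.1 * y.1) • z.2.1 + MulOpposite.op z.2.2 • (x.1 • y.2.1 + MulOpposite.op y.2.2 • x.2.1)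
        = x.1 • (y.1 • z.2.1 + MulOpposite.op z.2.2 • y.2.1) +
            MulOpposite.op (y.2.2 * z.2.2) • x.2.1
    haveI : SMulCommClass D₁ᵐᵒᵖ D₀ M := SMulCommClass.symm _ _ _
    rw [MulOpposite.op_mul, smul_add, smul_add, mul_smul, mul_smul]
    rw [smul_comm (MulOpposite.op z.2.2) x.1 y.2.1]
    abel
  one_mul x := by
    refine Prod.ext (one_mul _) (Prod.ext ?_ (one_mul _))
    show (1 : D₀) • x.2.1 + MulOpposite.op x.2.2 • (0 : M) = x.2.1
    rw [one_smul, smul_zero, add_zero]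
  mul_one x := by
    refine Prod.ext (mul_one _) (Prod.ext ?_ (mul_one _))
    show x.1 • (0 : M) + MulOpposite.op (1 : D₁) • x.2.1 = x.2.1
    rw [smul_zero, MulOpposite.op_one, one_smul, zero_add]
  left_distrib x y z := by
    refine Prod.ext (mul_add _ _ _) (Prod.ext ?_ (mul_add _ _ _))
    show x.1 • (y.2.1 + z.2.1) + MulOpposite.op (y.2.2 + z.2.2) • x.2.1
        = x.1 • y.2.1 + MulOpposite.op y.2.2 • x.2.1 +
            (x.1 • z.2.1 + MulOpposite.op z.2.2 • x.2.1)
    rw [smul_add, MulOpposite.op_add, add_smul]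
    abel
  right_distrib x y z := by
    refine Prod.ext (add_mul _ _ _) (Prod.ext ?_ (add_mul _ _ _))
    show (x.1 + y.1) • z.2.1 + MulOpposite.op z.2.2 • (x.2.1 + y.2.1)
        = x.1 • z.2.1 + MulOpposite.op z.2.2 • x.2.1 +
            (y.1 • z.2.1 + MulOpposite.op z.2.2 • y.2.1)
    rw [add_smul, smul_add]
    abel
  zero_mul x := by
    refine Prod.ext (zero_mul _) (Prod.ext ?_ (zero_mul _))
    show (0 : D₀) • x.2.1 + MulOpposite.op x.2.2 • (0 : M) = 0
    rw [zero_smul, smul_zero, add_zero]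
  mul_zero x := by
    refine Prod.ext (mul_zero _) (Prod.ext ?_ (mul_zero _))
    show x.1 • (0 : M) + MulOpposite.op (0 : D₁) • x.2.1 = 0
    rw [smul_zero, MulOpposite.op_zero, zero_smul, add_zero]

@[simp] lemma mul_def (x y : Species D₀ D₁ M) :
    x * y = (x.1 * y.1, x.1 • y.2.1 + MulOpposite.op y.2.2 • x.2.1, x.2.2 * y.2.2) := rfl

@[simp] lemma one_def : (1 : Species D₀ D₁ M) = (1, 0, 1) := rfl

/-- The idempotent `e₀`. -/
def e0 : Species D₀ D₁ M := (1, 0, 0)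

/-- The idempotent `e₁`. -/
def e1 : Species D₀ D₁ M := (0, 0, 1)

end Species

end Species

section Statement5

variable (D₀ D₁ : Type) [DivisionRing D₀] [DivisionRing D₁]
variable (M : Type) [AddCommGroup M] [Module D₀ M] [Module D₁ᵐᵒᵖ M]
  [SMulCommClass D₀ D₁ᵐᵒᵖ M]

/-- The right `A_M`-module `(M*  D₁)`: the carrier is `M* × D₁` and
`(δ, b) • (α, m; 0, β) = (δα, δ(m) + bβ)`, where `(δα)(x) = δ(αx)`. -/
def InjRight (D₀ D₁ : Type) [DivisionRing D₁] (M : Type) [AddCommGroup M]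
    [Module D₁ᵐᵒᵖ M] : Type := RightDual D₁ M × D₁

instance : AddCommGroup (InjRight D₀ D₁ M) :=
  inferInstanceAs (AddCommGroup (RightDual D₁ M × D₁))

noncomputable instance : Module (Species D₀ D₁ M)ᵐᵒᵖ (InjRight D₀ D₁ M) where
  smul y p := (MulOpposite.op y.unop.1 • p.1, p.1 y.unop.2.1 + p.2 * y.unop.2.2)
  one_smul p := by
    refine Prod.ext ?_ ?_
    · show MulOpposite.op (1 : D₀) • p.1 = p.1
      apply LinearMap.ext; intro z
      show p.1 ((1 : D₀) • z) = p.1 z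
      rw [one_smul]
    · show p.1 (0 : M) + p.2 * 1 = p.2
      rw [map_zero, mul_one, zero_add]
  mul_smul x y p := by
    refine Prod.ext ?_ ?_
    · apply LinearMap.ext; intro z
      show p.1 ((y.unop.1 * x.unop.1) • z) = p.1 (y.unop.1 • x.unop.1 • z)
      rw [mul_smul]
    · show p.1 (y.unop.1 • x.unop.2.1 + MulOpposite.op x.unop.2.2 • y.unop.2.1)
          + p.2 * (y.unop.2.2 * x.unop.2.2)
        = p.1 (y.unop.1 • x.unop.2.1) + (p.1 y.unop.2.1 + p.2 * y.unop.2.2) * x.unop.2.2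
      rw [map_add, LinearMap.map_smul, MulOpposite.smul_eq_mul_unop, MulOpposite.unop_op,
        add_mul, mul_assoc, add_assoc]
  smul_zero y := by
    refine Prod.ext ?_ ?_
    · apply LinearMap.ext; intro z; rfl
    · show (0 : RightDual D₁ M) y.unop.2.1 + 0 * y.unop.2.2 = 0
      rw [LinearMap.zero_apply, zero_mul, add_zero]
  smul_add y p q := by
    refine Prod.ext ?_ ?_
    · apply LinearMap.ext; intro z; rfl
    · show (p.1 + q.1) y.unop.2.1 + (p.2 + q.2) * y.unop.2.2
        = p.1 y.unop.2.1 + p.2 * y.unop.2.2 + (q.1 y.unop.2.1 + q.2 * y.unop.2.2)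
      rw [LinearMap.add_apply, add_mul]
      abel
  add_smul x y p := by
    refine Prod.ext ?_ ?_
    · apply LinearMap.ext; intro z
      show p.1 ((x.unop.1 + y.unop.1) • z) = p.1 (x.unop.1 • z) + p.1 (y.unop.1 • z)
      rw [add_smul, map_add]
    · show p.1 (x.unop.2.1 + y.unop.2.1) + p.2 * (x.unop.2.2 + y.unop.2.2)
        = p.1 x.unop.2.1 + p.2 * x.unop.2.2 + (p.1 y.unop.2.1 + p.2 * y.unop.2.2)
      rw [map_add, mul_add]
      abel
  zero_smul p := by
    refine Prod.ext ?_ ?_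
    · apply LinearMap.ext; intro z
      show p.1 ((0 : D₀) • z) = 0
      rw [zero_smul, map_zero]
    · show p.1 (0 : M) + p.2 * 0 = 0
      rw [map_zero, mul_zero, add_zero]

namespace Statement5Aux

open MulOpposite

/-- The element `(0, m, 0)` of the species. -/
def mElt (m : M) : Species D₀ D₁ M := (0, m, 0)

/-- The element `(0, 0, b)` of the species. -/
def emb1 (b : D₁) : Species D₀ D₁ M := (0, 0, b)

lemma emb1_one : emb1 D₀ D₁ M 1 = Species.e1 D₀ D₁ M := rfl

lemma emb1_mul (b c : D₁) :
    emb1 D₀ D₁ M b * emb1 D₀ D₁ M c = emb1 D₀ D₁ M (b * c) := by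
  simp [emb1]

lemma emb1_mul_e1 (b : D₁) :
    emb1 D₀ D₁ M b * Species.e1 D₀ D₁ M = emb1 D₀ D₁ M b := by
  rw [← emb1_one, emb1_mul, mul_one]

lemma e1_mul_emb1 (b : D₁) :
    Species.e1 D₀ D₁ M * emb1 D₀ D₁ M b = emb1 D₀ D₁ M b := by
  rw [← emb1_one, emb1_mul, one_mul]

lemma e1_mul_e1 :
    Species.e1 D₀ D₁ M * Species.e1 D₀ D₁ M = Species.e1 D₀ D₁ M := by
  rw [← emb1_one, emb1_mul, one_mul]

lemma mElt_mul_e1 (m : M) :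
    mElt D₀ D₁ M m * Species.e1 D₀ D₁ M = mElt D₀ D₁ M m := by
  simp [mElt, Species.e1]

lemma mElt_mul_emb1 (m : M) (b : D₁ᵐᵒᵖ) :
    mElt D₀ D₁ M m * emb1 D₀ D₁ M b.unop = mElt D₀ D₁ M (b • m) := by
  apply Prod.ext
  · simp [mElt, emb1]
  · apply Prod.ext
    · show (0 : D₀) • (0 : M) + op b.unop • m = b • m
      rw [zero_smul, zero_add, op_unop]
    · simp [mElt, emb1]

lemma mul_mElt (a : Species D₀ D₁ M) (m : M) :
    a * mElt D₀ D₁ M m = mElt D₀ D₁ M (a.1 • m) := by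
  apply Prod.ext
  · simp [mElt]
  · apply Prod.ext
    · show a.1 • m + op (0 : D₁) • a.2.1 = a.1 • m
      rw [op_zero, zero_smul, add_zero]
    · simp [mElt]

lemma mElt_add (m m' : M) :
    mElt D₀ D₁ M (m + m') = mElt D₀ D₁ M m + mElt D₀ D₁ M m' := by
  apply Prod.ext
  · simp [mElt]
  · apply Prod.ext <;> simp [mElt]

lemma mul_e1 (a : Species D₀ D₁ M) :
    a * Species.e1 D₀ D₁ M = mElt D₀ D₁ M a.2.1 + emb1 D₀ D₁ M a.2.2 := by
  apply Prod.ext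
  · simp [mElt, emb1, Species.e1]
  · apply Prod.ext
    · show a.1 • (0 : M) + op (1 : D₁) • a.2.1 = a.2.1 + 0
      rw [smul_zero, op_one, one_smul, zero_add, add_zero]
    · simp [mElt, emb1, Species.e1]

variable (Z : Type) [AddCommGroup Z] [Module (Species D₀ D₁ M)ᵐᵒᵖ Z]

/-- The additive subgroup of elements fixed by (right multiplication by) `e₁`. -/
def E1 : AddSubgroup Z where
  carrier := {z | op (Species.e1 D₀ D₁ M) • z = z}
  add_mem' := by
    intro a b ha hb
    show op (Species.e1 D₀ D₁ M) • (a + b) = a + b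
    rw [smul_add]
    rw [Set.mem_setOf_eq] at ha hb
    rw [ha, hb]
  zero_mem' := smul_zero _
  neg_mem' := by
    intro a ha
    show op (Species.e1 D₀ D₁ M) • (-a) = -a
    rw [smul_neg]
    rw [Set.mem_setOf_eq] at ha
    rw [ha]

lemma mem_E1_iff (z : Z) :
    z ∈ E1 D₀ D₁ M Z ↔ op (Species.e1 D₀ D₁ M) • z = z := Iff.rfl

lemma emb1_smul_mem (b : D₁) (z : Z) (hz : z ∈ E1 D₀ D₁ M Z) :
    op (emb1 D₀ D₁ M b) • z ∈ E1 D₀ D₁ M Z := by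
  rw [mem_E1_iff, ← mul_smul, ← op_mul, emb1_mul_e1]

lemma e1_smul_mem (z : Z) : op (Species.e1 D₀ D₁ M) • z ∈ E1 D₀ D₁ M Z := by
  rw [mem_E1_iff, ← mul_smul, ← op_mul, e1_mul_e1]

lemma mElt_smul_mem (m : M) (z : Z) :
    op (mElt D₀ D₁ M m) • z ∈ E1 D₀ D₁ M Z := by
  rw [mem_E1_iff, ← mul_smul, ← op_mul, mElt_mul_e1]

instance : Module D₁ᵐᵒᵖ (E1 D₀ D₁ M Z) where
  smul b z := ⟨op (emb1 D₀ D₁ M b.unop) • z.1, emb1_smul_mem D₀ D₁ M Z _ _ z.2⟩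
  one_smul z := by
    apply Subtype.ext
    show op (emb1 D₀ D₁ M (1 : D₁ᵐᵒᵖ).unop) • z.1 = z.1
    rw [unop_one, emb1_one]
    exact z.2
  mul_smul a b z := by
    apply Subtype.ext
    show op (emb1 D₀ D₁ M (a * b).unop) • z.1
        = op (emb1 D₀ D₁ M a.unop) • op (emb1 D₀ D₁ M b.unop) • z.1
    rw [← mul_smul, ← op_mul, emb1_mul, unop_mul]
  smul_zero b := by
    apply Subtype.ext
    show op (emb1 D₀ D₁ M b.unop) • (0 : Z) = 0
    rw [smul_zero]
  smul_add b z w := by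
    apply Subtype.ext
    show op (emb1 D₀ D₁ M b.unop) • (z.1 + w.1)
        = op (emb1 D₀ D₁ M b.unop) • z.1 + op (emb1 D₀ D₁ M b.unop) • w.1
    rw [smul_add]
  add_smul a b z := by
    apply Subtype.ext
    show op (emb1 D₀ D₁ M (a + b).unop) • z.1
        = op (emb1 D₀ D₁ M a.unop) • z.1 + op (emb1 D₀ D₁ M b.unop) • z.1
    have : emb1 D₀ D₁ M (a + b).unop = emb1 D₀ D₁ M a.unop + emb1 D₀ D₁ M b.unop := by
      rw [unop_add]
      apply Prod.ext
      · simp [emb1]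
      · apply Prod.ext <;> simp [emb1]
    rw [this, op_add, add_smul]
  zero_smul z := by
    apply Subtype.ext
    show op (emb1 D₀ D₁ M (0 : D₁ᵐᵒᵖ).unop) • z.1 = 0
    have : emb1 D₀ D₁ M (0 : D₁ᵐᵒᵖ).unop = 0 := by
      apply Prod.ext
      · simp [emb1]
      · apply Prod.ext <;> simp [emb1]
    rw [this, op_zero, zero_smul]

lemma E1_smul_def (b : D₁ᵐᵒᵖ) (z : E1 D₀ D₁ M Z) :
    (b • z).1 = op (emb1 D₀ D₁ M b.unop) • z.1 := rfl

/-- Projection `z ↦ z·e₁` into `E1`. -/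
def proj (z : Z) : E1 D₀ D₁ M Z :=
  ⟨op (Species.e1 D₀ D₁ M) • z, e1_smul_mem D₀ D₁ M Z z⟩

variable {Z}

/-- Given a `D₁`-linear functional `γ` on the `e₁`-part of `Z` and `z : Z`,
the element of `M*` given by `m ↦ γ (z · (0, m, 0))`. -/
def dualPart (γ : E1 D₀ D₁ M Z →ₗ[D₁ᵐᵒᵖ] D₁) (z : Z) : RightDual D₁ M where
  toFun m := γ ⟨op (mElt D₀ D₁ M m) • z, mElt_smul_mem D₀ D₁ M Z m z⟩
  map_add' m m' := by
    rw [← map_add]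
    show γ _ = γ _
    congr 1
    apply Subtype.ext
    show op (mElt D₀ D₁ M (m + m')) • z
        = op (mElt D₀ D₁ M m) • z + op (mElt D₀ D₁ M m') • z
    rw [mElt_add, op_add, add_smul]
  map_smul' b m := by
    show γ _ = b • γ _
    rw [← map_smul]
    congr 1
    apply Subtype.ext
    show op (mElt D₀ D₁ M (b • m)) • z
        = op (emb1 D₀ D₁ M b.unop) • op (mElt D₀ D₁ M m) • z
    rw [← mul_smul, ← op_mul, mElt_mul_emb1]

/-- The candidate extension `Y → (M*, D₁)` built from a functional on the `e₁`-part. -/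
def extMap (γ : E1 D₀ D₁ M Z →ₗ[D₁ᵐᵒᵖ] D₁) :
    Z →ₗ[(Species D₀ D₁ M)ᵐᵒᵖ] InjRight D₀ D₁ M where
  toFun z := (dualPart D₀ D₁ M γ z, γ (proj D₀ D₁ M Z z))
  map_add' z w := by
    refine Prod.ext ?_ ?_
    · apply LinearMap.ext; intro m
      show γ _ = γ _ + γ _
      rw [← map_add]
      congr 1
      apply Subtype.ext
      show op (mElt D₀ D₁ M m) • (z + w)
          = op (mElt D₀ D₁ M m) • z + op (mElt D₀ D₁ M m) • w
      rw [smul_add]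
    · show γ _ = γ _ + γ _
      rw [← map_add]
      congr 1
      apply Subtype.ext
      show op (Species.e1 D₀ D₁ M) • (z + w)
          = op (Species.e1 D₀ D₁ M) • z + op (Species.e1 D₀ D₁ M) • w
      rw [smul_add]
  map_smul' a z := by
    refine Prod.ext ?_ ?_
    · apply LinearMap.ext; intro m
      show γ _ = (op a.unop.1 • dualPart D₀ D₁ M γ z) m
      rw [RightDual.opSMul_apply, unop_op]
      show γ _ = γ _
      congr 1
      apply Subtype.ext
      show op (mElt D₀ D₁ M m) • (a • z) = op (mElt D₀ D₁ M (a.unop.1 • m)) • z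
      have h : op (mElt D₀ D₁ M m) * a = op (mElt D₀ D₁ M (a.unop.1 • m)) := by
        rw [← mul_mElt, op_mul, op_unop]
      rw [← mul_smul, h]
    · show γ (proj D₀ D₁ M Z (a • z))
          = dualPart D₀ D₁ M γ z a.unop.2.1 + γ (proj D₀ D₁ M Z z) * a.unop.2.2
      have h1 : proj D₀ D₁ M Z (a • z)
          = ⟨op (mElt D₀ D₁ M a.unop.2.1) • z, mElt_smul_mem D₀ D₁ M Z _ z⟩
            + (op a.unop.2.2 : D₁ᵐᵒᵖ) • proj D₀ D₁ M Z z := by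
        apply Subtype.ext
        show op (Species.e1 D₀ D₁ M) • (a • z)
            = op (mElt D₀ D₁ M a.unop.2.1) • z
              + op (emb1 D₀ D₁ M (op a.unop.2.2).unop) • (op (Species.e1 D₀ D₁ M) • z)
        have e1a : op (Species.e1 D₀ D₁ M) * a = op (a.unop * Species.e1 D₀ D₁ M) := by
          rw [op_mul, op_unop]
        rw [unop_op, ← mul_smul, e1a, mul_e1, op_add, add_smul]
        congr 1
        rw [← mul_smul, ← op_mul, e1_mul_emb1]
      rw [h1, map_add, map_smul, MulOpposite.smul_eq_mul_unop, unop_op]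
      rfl

variable (Z)

/-- The `e₁`-component of a map to `(M*, D₁)`, as a `D₁`-linear functional
on the `e₁`-part. -/
noncomputable def gammaOf (g : Z →ₗ[(Species D₀ D₁ M)ᵐᵒᵖ] InjRight D₀ D₁ M) :
    E1 D₀ D₁ M Z →ₗ[D₁ᵐᵒᵖ] D₁ where
  toFun z := (g z.1).2
  map_add' z w := by
    show (g (z.1 + w.1)).2 = (g z.1).2 + (g w.1).2
    rw [map_add]
    rfl
  map_smul' b z := by
    show (g (op (emb1 D₀ D₁ M b.unop) • z.1)).2 = b • (g z.1).2
    rw [map_smul]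
    show (g z.1).1 (0 : M) + (g z.1).2 * b.unop = b • (g z.1).2
    rw [map_zero, zero_add, MulOpposite.smul_eq_mul_unop]

/-- The restriction of a linear map to the `e₁`-parts. -/
def restrict {X Y : Type} [AddCommGroup X] [AddCommGroup Y]
    [Module (Species D₀ D₁ M)ᵐᵒᵖ X] [Module (Species D₀ D₁ M)ᵐᵒᵖ Y]
    (f : X →ₗ[(Species D₀ D₁ M)ᵐᵒᵖ] Y) :
    E1 D₀ D₁ M X →ₗ[D₁ᵐᵒᵖ] E1 D₀ D₁ M Y where
  toFun x := ⟨f x.1, by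
    rw [mem_E1_iff, ← map_smul, x.2]⟩
  map_add' x y := Subtype.ext (map_add f _ _)
  map_smul' b x := Subtype.ext (map_smul f _ _)

end Statement5Aux

open Statement5Aux MulOpposite in
/-- For division rings `D₀`, `D₁` and a `D₀`–`D₁`-bimodule `M` which
is finite-dimensional on both sides, the right `A_M`-module `(M*  D₁)` with action
`(δ, b) • (α, m; 0, β) = (δα, δ(m) + bβ)` is injective. -/
theorem statement5 [Module.Finite D₀ M] [Module.Finite D₁ᵐᵒᵖ M] :
    Module.Injective (Species D₀ D₁ M)ᵐᵒᵖ (InjRight D₀ D₁ M) := by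
  constructor
  intro X Y _ _ _ _ f hf g
  -- restrict `f` to the `e₁`-parts
  set F : E1 D₀ D₁ M X →ₗ[D₁ᵐᵒᵖ] E1 D₀ D₁ M Y := restrict D₀ D₁ M f with hFdef
  have hFinj : Function.Injective F := by
    intro x y hxy
    exact Subtype.ext (hf (congrArg Subtype.val hxy))
  -- the functional on the `e₁`-part of `X` coming from `g`
  set γX : E1 D₀ D₁ M X →ₗ[D₁ᵐᵒᵖ] D₁ := gammaOf D₀ D₁ M X g with hγXdef
  -- extend it along `F`, using that `D₁ᵐᵒᵖ` is a division ring
  set e : E1 D₀ D₁ M X ≃ₗ[D₁ᵐᵒᵖ] LinearMap.range F := LinearEquiv.ofInjective F hFinj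
    with hedef
  obtain ⟨γ, hγ⟩ := LinearMap.exists_extend (γX.comp (e.symm : LinearMap.range F →ₗ[D₁ᵐᵒᵖ]
    E1 D₀ D₁ M X))
  have key : ∀ v : E1 D₀ D₁ M X, γ (F v) = γX v := by
    intro v
    have h1 : F v = (LinearMap.range F).subtype ⟨F v, LinearMap.mem_range_self F v⟩ := rfl
    rw [h1, ← LinearMap.comp_apply, hγ, LinearMap.comp_apply]
    have h2 : (⟨F v, LinearMap.mem_range_self F v⟩ : LinearMap.range F) = e v :=
      Subtype.ext (by rw [hedef, LinearEquiv.ofInjective_apply])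
    rw [h2]
    show γX (e.symm (e v)) = γX v
    rw [LinearEquiv.symm_apply_apply]
  refine ⟨extMap D₀ D₁ M γ, fun x => ?_⟩
  refine Prod.ext ?_ ?_
  · apply LinearMap.ext; intro m
    show γ ⟨op (mElt D₀ D₁ M m) • f x, _⟩ = (g x).1 m
    have h1 : (⟨op (mElt D₀ D₁ M m) • f x, mElt_smul_mem D₀ D₁ M Y m (f x)⟩ :
        E1 D₀ D₁ M Y) = F ⟨op (mElt D₀ D₁ M m) • x, mElt_smul_mem D₀ D₁ M X m x⟩ :=
      Subtype.ext (by
        show op (mElt D₀ D₁ M m) • f x = f (op (mElt D₀ D₁ M m) • x)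
        rw [map_smul])
    rw [h1, key]
    show (g (op (mElt D₀ D₁ M m) • x)).2 = (g x).1 m
    rw [map_smul]
    show (g x).1 ((mElt D₀ D₁ M m).2.1) + (g x).2 * (mElt D₀ D₁ M m).2.2 = (g x).1 m
    show (g x).1 m + (g x).2 * 0 = (g x).1 m
    rw [mul_zero, add_zero]
  · show γ (proj D₀ D₁ M Y (f x)) = (g x).2
    have h1 : proj D₀ D₁ M Y (f x)
        = F ⟨op (Species.e1 D₀ D₁ M) • x, e1_smul_mem D₀ D₁ M X x⟩ :=
      Subtype.ext (by
        show op (Species.e1 D₀ D₁ M) • f x = f (op (Species.e1 D₀ D₁ M) • x)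
        rw [map_smul])
    rw [h1, key]
    show (g (op (Species.e1 D₀ D₁ M) • x)).2 = (g x).2
    rw [map_smul]
    show (g x).1 (0 : M) + (g x).2 * 1 = (g x).2
    rw [map_zero, zero_add, mul_one]

end Statement5
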